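/- Let N ⊂ (0,∞) be a set of Lebesgue measure zero, and let v : [0,∞) → H be such that the map t ↦ j(v(t)) is continuous from [0,∞) to Y and such that ‖v(t₂)‖ ≤ ‖v(t₁)‖ whenever t₁, t₂ ∈ [0,∞)∖N and t₁ ≤ t₂. Then for every t₁ ∈ [0,∞)∖N and every t₂ ≥ t₁ (with t₂ arbitrary, not necessarily outside N) one has ‖v(t₂)‖ ≤ ‖v(t₁)‖. -/

import Mathlib

open MeasureTheory Set Filter

/-- Monotonicity transfer: if t ↦ j(v(t)) is continuous and ‖v(·)‖ is
nonincreasing along times outside a null set N, then ‖v(t₂)‖ ≤ ‖v(t₁)‖ for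
every t₁ outside N and every t₂ ≥ t₁. -/
theorem stmt_14 {H : Type*} [NormedAddCommGroup H] [InnerProductSpace ℝ H]
    [CompleteSpace H] {Y : Type*} [NormedAddCommGroup Y] [NormedSpace ℝ Y]
    (j : H →L[ℝ] Y) (hj : Function.Injective j)
    {N : Set ℝ} (hN : N ⊆ Ioi 0) (hN0 : volume N = 0)
    (v : ℝ → H) (hcont : ContinuousOn (fun t => j (v t)) (Ici 0))
    (hmono : ∀ t₁ ∈ Ici (0 : ℝ) \ N, ∀ t₂ ∈ Ici (0 : ℝ) \ N,
      t₁ ≤ t₂ → ‖v t₂‖ ≤ ‖v t₁‖) :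
    ∀ t₁ ∈ Ici (0 : ℝ) \ N, ∀ t₂ : ℝ, t₁ ≤ t₂ → ‖v t₂‖ ≤ ‖v t₁‖ := by
  intro t₁ ht₁ t₂ h12
  have ht₁0 : (0 : ℝ) ≤ t₁ := ht₁.1
  have ht₂0 : (0 : ℝ) ≤ t₂ := le_trans ht₁0 h12
  by_cases ht₂N : t₂ ∈ N
  · -- the hard case: t₂ ∈ N
    set C := ‖v t₁‖ with hC
    -- choose points sₙ ∈ (t₂, t₂ + 1/(n+1)) outside N
    have key : ∀ n : ℕ, ∃ s, s ∈ Ioo t₂ (t₂ + 1 / (n + 1)) ∧ s ∉ N := by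
      intro n
      by_contra h
      push_neg at h
      have hsub : Ioo t₂ (t₂ + 1 / (n + 1)) ⊆ N := fun s hs => h s hs
      have hle : volume (Ioo t₂ (t₂ + 1 / (n + 1))) ≤ volume N :=
        measure_mono hsub
      rw [hN0, Real.volume_Ioo] at hle
      have hpos : (0 : ℝ) < 1 / (n + 1) := by positivity
      simp only [nonpos_iff_eq_zero, ENNReal.ofReal_eq_zero] at hle
      linarith
    choose s hs hsN using key
    have hst : ∀ n, t₂ < s n := fun n => (hs n).1
    have hs0 : ∀ n, s n ∈ Ici (0 : ℝ) := fun n => le_trans ht₂0 (hst n).le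
    -- norms of v (s n) are bounded by C
    have hbound : ∀ n, ‖v (s n)‖ ≤ C := by
      intro n
      exact hmono t₁ ht₁ (s n) ⟨hs0 n, hsN n⟩ (le_trans h12 (hst n).le)
    -- s n → t₂
    have hslim : Tendsto s atTop (nhds t₂) := by
      have hup : Tendsto (fun n : ℕ => t₂ + 1 / (n + 1 : ℝ)) atTop (nhds (t₂ + 0)) :=
        tendsto_const_nhds.add tendsto_one_div_add_atTop_nhds_zero_nat
      rw [add_zero] at hup
      exact tendsto_of_tendsto_of_tendsto_of_le_of_le tendsto_const_nhds hup
        (fun n => (hst n).le) (fun n => ((hs n).2).le)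
    -- j (v (s n)) → j (v t₂)
    have hjlim : Tendsto (fun n => j (v (s n))) atTop (nhds (j (v t₂))) := by
      have hwithin : Tendsto s atTop (nhdsWithin t₂ (Ici (0 : ℝ))) := by
        rw [tendsto_nhdsWithin_iff]
        exact ⟨hslim, Eventually.of_forall hs0⟩
      exact (hcont t₂ ht₂0).tendsto.comp hwithin
    set u := v t₂ with hu
    -- the submodule of vectors representing functionals of the form ψ ∘ j
    set T : StrongDual ℝ Y →ₗ[ℝ] H :=
      { toFun := fun ψ => (InnerProductSpace.toDual ℝ H).symm (ψ.comp j)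
        map_add' := fun ψ φ => by
          simp [ContinuousLinearMap.add_comp]
        map_smul' := fun c ψ => by
          simp [ContinuousLinearMap.smul_comp] } with hT
    have hTapp : ∀ (ψ : StrongDual ℝ Y) (x : H),
        inner ℝ (T ψ) x = ψ (j x) := by
      intro ψ x
      simp only [hT, LinearMap.coe_mk, AddHom.coe_mk]
      rw [InnerProductSpace.toDual_symm_apply]
      rfl
    -- key inequality on the range of T
    have hrange : ∀ ψ : StrongDual ℝ Y,
        |(inner ℝ (T ψ) u : ℝ)| ≤ ‖T ψ‖ * C := by
      intro ψ
      have hlim2 : Tendsto (fun n => |(inner ℝ (T ψ) (v (s n)) : ℝ)|) atTop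
          (nhds |(inner ℝ (T ψ) u : ℝ)|) := by
        have : Tendsto (fun n => (ψ (j (v (s n))) : ℝ)) atTop (nhds (ψ (j u))) :=
          (ψ.continuous.tendsto _).comp hjlim
        simp only [← hTapp] at this
        exact this.abs
      refine le_of_tendsto hlim2 (Eventually.of_forall fun n => ?_)
      calc |(inner ℝ (T ψ) (v (s n)) : ℝ)| ≤ ‖T ψ‖ * ‖v (s n)‖ :=
            abs_real_inner_le_norm _ _
        _ ≤ ‖T ψ‖ * C := by
            exact mul_le_mul_of_nonneg_left (hbound n) (norm_nonneg _)
    -- the range of T is dense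
    have horth : (LinearMap.range T)ᗮ = ⊥ := by
      rw [Submodule.eq_bot_iff]
      intro x hx
      have hx' : ∀ ψ : StrongDual ℝ Y, ψ (j x) = 0 := by
        intro ψ
        have := hx (T ψ) ⟨ψ, rfl⟩
        rwa [hTapp] at this
      have : j x = 0 := NormedSpace.eq_zero_of_forall_dual_eq_zero ℝ hx'
      have : j x = j 0 := by rwa [map_zero]
      exact hj this
    have hdense : Dense ((LinearMap.range T : Submodule ℝ H) : Set H) := by
      exact Submodule.dense_iff_topologicalClosure_eq_top.mpr
        (Submodule.topologicalClosure_eq_top_iff.mpr horth)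
    -- transfer the inequality to all of H by density
    have hall : ∀ w : H, |(inner ℝ w u : ℝ)| ≤ ‖w‖ * C := by
      have hclosed : IsClosed {w : H | |(inner ℝ w u : ℝ)| ≤ ‖w‖ * C} := by
        apply isClosed_le
        · exact (continuous_id.inner continuous_const).abs
        · exact continuous_norm.mul continuous_const
      have hsub : ((LinearMap.range T : Submodule ℝ H) : Set H) ⊆
          {w : H | |(inner ℝ w u : ℝ)| ≤ ‖w‖ * C} := by
        rintro w ⟨ψ, rfl⟩
        exact hrange ψ
      have := hclosed.closure_subset_iff.mpr hsub
      intro w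
      exact this (hdense.closure_eq ▸ mem_univ w : w ∈ closure _)
    -- take w = u
    have hfin : ‖u‖ * ‖u‖ ≤ ‖u‖ * C := by
      have := hall u
      rwa [real_inner_self_eq_norm_mul_norm, abs_of_nonneg (mul_self_nonneg _)] at this
    have hC0 : 0 ≤ C := norm_nonneg _
    by_cases hu0 : ‖u‖ = 0
    · rw [hu0]; exact hC0
    · have hupos : 0 < ‖u‖ := lt_of_le_of_ne (norm_nonneg _) (Ne.symm hu0)
      exact le_of_mul_le_mul_left hfin hupos
  · exact hmono t₁ ht₁ t₂ ⟨ht₂0, ht₂N⟩ h12
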